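/- Fix x ≠ y in a compact metric space Ω with r = d(x,y), and let I ⊂ J be a compact interval on which a family of projections π_λ satisfies transversality and regularity of order τ ∈ [0,1) with constants δ and C₁ (as in the Peres–Schlag conditions, with Φ_λ(x,y) = (π_λ(x)−π_λ(y))/r). Write the open set {λ ∈ int I : |Φ_λ(x,y)| < δ r^τ} as a disjoint union of maximal open intervals I₁, I₂, …. Then each I_j has length at most 2, and any I_j sharing no boundary point with I satisfies L¹(I_j) ≥ (2δ/C₁) r^{2τ}; consequently there are only finitely many intervals I_j. -/

import Mathlib

open Set Filter Topology

/-- Structure of the "bad" set `{λ ∈ int I : |Φ_λ| < δ r^τ}` under transversality and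
regularity: each maximal open subinterval `(c,d)` has length at most `2`; if it shares no
boundary point with `I = [a,b]` then its length is at least `(2δ/C₁) r^{2τ}`; and there are
only finitely many maximal subintervals. -/
theorem aux_interval (a b c d K M : ℝ) (hK : 0 < K) (hcd : c < d)
    (hac : a ≤ c) (hdb : d ≤ b)
    (Φ Φ' : ℝ → ℝ)
    (hderiv : ∀ lam ∈ Icc a b, HasDerivAt Φ (Φ' lam) lam)
    (hpos : ∀ lam ∈ Ioo c d, K ≤ Φ' lam)
    (hbound : ∀ lam ∈ Ioo c d, |Φ lam| < K)
    (hM : ∀ lam ∈ Ioo c d, |Φ' lam| ≤ M) :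
    d - c ≤ 2 ∧ (K ≤ |Φ c| → K ≤ |Φ d| → 2 * K ≤ M * (d - c)) := by
  have hmemIcc : Icc c d ⊆ Icc a b := Icc_subset_Icc hac hdb
  have hcont : ContinuousOn Φ (Icc c d) := fun x hx =>
    ((hderiv x (hmemIcc hx)).continuousAt).continuousWithinAt
  obtain ⟨z, hz, hslope⟩ := exists_hasDerivAt_eq_slope Φ Φ' hcd hcont
    (fun x hx => hderiv x (hmemIcc (Ioo_subset_Icc_self hx)))
  have hdc : 0 < d - c := sub_pos.mpr hcd
  rw [eq_div_iff hdc.ne'] at hslope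
  have key1 : K * (d - c) ≤ Φ d - Φ c := by
    rw [← hslope]; exact mul_le_mul_of_nonneg_right (hpos z hz) hdc.le
  have hcc : ContinuousAt Φ c := (hderiv c (hmemIcc (left_mem_Icc.mpr hcd.le))).continuousAt
  have hdd : ContinuousAt Φ d := (hderiv d (hmemIcc (right_mem_Icc.mpr hcd.le))).continuousAt
  have hΦc : |Φ c| ≤ K := by
    haveI hne : (𝓝[Ioo c d] c).NeBot := by
      rw [← mem_closure_iff_nhdsWithin_neBot, closure_Ioo hcd.ne]
      exact left_mem_Icc.mpr hcd.le
    have ht : Tendsto (fun x => |Φ x|) (𝓝[Ioo c d] c) (𝓝 (|Φ c|)) :=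
      hcc.abs.continuousWithinAt
    refine le_of_tendsto ht ?_
    filter_upwards [self_mem_nhdsWithin] with x hx using (hbound x hx).le
  have hΦd : |Φ d| ≤ K := by
    haveI hne : (𝓝[Ioo c d] d).NeBot := by
      rw [← mem_closure_iff_nhdsWithin_neBot, closure_Ioo hcd.ne]
      exact right_mem_Icc.mpr hcd.le
    have ht : Tendsto (fun x => |Φ x|) (𝓝[Ioo c d] d) (𝓝 (|Φ d|)) :=
      hdd.abs.continuousWithinAt
    refine le_of_tendsto ht ?_
    filter_upwards [self_mem_nhdsWithin] with x hx using (hbound x hx).le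
  have habs : Φ d - Φ c ≤ 2 * K := by
    have h1 : Φ d ≤ |Φ d| := le_abs_self _
    have h2 : -(Φ c) ≤ |Φ c| := neg_le_abs _
    linarith
  constructor
  · nlinarith
  · intro h1 h2
    have hΦceq : Φ c = -K := by
      have he : |Φ c| = K := le_antisymm hΦc h1
      rcases (abs_eq hK.le).mp he with h | h
      · exfalso
        have h3 : Φ d ≤ K := (le_abs_self _).trans hΦd
        nlinarith [mul_pos hK hdc]
      · exact h
    have hΦdeq : Φ d = K := by
      have he : |Φ d| = K := le_antisymm hΦd h2
      rcases (abs_eq hK.le).mp he with h | h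
      · exact h
      · exfalso
        have h3 : -K ≤ Φ c := neg_le_of_abs_le hΦc
        nlinarith [mul_pos hK hdc]
    calc 2 * K = Φ' z * (d - c) := by rw [hslope, hΦdeq, hΦceq]; ring
      _ ≤ M * (d - c) := mul_le_mul_of_nonneg_right ((le_abs_self _).trans (hM z hz)) hdc.le

theorem bad_set_interval_decomposition
    (a b r τ δ C₁ : ℝ) (hab : a ≤ b) (hr : 0 < r) (hτ0 : 0 ≤ τ) (hτ1 : τ < 1)
    (hδ : 0 < δ) (hC₁ : 0 < C₁)
    (Φ Φ' : ℝ → ℝ)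
    (hderiv : ∀ lam ∈ Icc a b, HasDerivAt Φ (Φ' lam) lam)
    (hcont : ContinuousOn Φ' (Icc a b))
    (htrans : ∀ lam ∈ Icc a b, |Φ lam| ≤ δ * r ^ τ → δ * r ^ τ ≤ |Φ' lam|)
    (hreg : ∀ lam ∈ Icc a b, |Φ' lam| ≤ C₁ * r ^ (-τ)) :
    -- maximal open subintervals of the bad set
    (∀ c d : ℝ, c < d →
      Ioo c d ⊆ {lam ∈ Ioo a b | |Φ lam| < δ * r ^ τ} →
      (∀ c' d' : ℝ, Ioo c' d' ⊆ {lam ∈ Ioo a b | |Φ lam| < δ * r ^ τ} →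
        Ioo c d ⊆ Ioo c' d' → c' = c ∧ d' = d) →
      d - c ≤ 2 ∧ (a < c → d < b → (2 * δ / C₁) * r ^ (2 * τ) ≤ d - c)) ∧
    Set.Finite {p : ℝ × ℝ | p.1 < p.2 ∧
      Ioo p.1 p.2 ⊆ {lam ∈ Ioo a b | |Φ lam| < δ * r ^ τ} ∧
      (∀ c' d' : ℝ, Ioo c' d' ⊆ {lam ∈ Ioo a b | |Φ lam| < δ * r ^ τ} →
        Ioo p.1 p.2 ⊆ Ioo c' d' → c' = p.1 ∧ d' = p.2)} := by
  set K := δ * r ^ τ with hKdef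
  set M := C₁ * r ^ (-τ) with hMdef
  set ε := 2 * δ / C₁ * r ^ (2 * τ) with hεdef
  have hK : 0 < K := mul_pos hδ (Real.rpow_pos_of_pos hr τ)
  have hMpos : 0 < M := mul_pos hC₁ (Real.rpow_pos_of_pos hr _)
  have hε : 0 < ε := mul_pos (div_pos (by linarith) hC₁) (Real.rpow_pos_of_pos hr _)
  have hεM : ε * M = 2 * K := by
    have h1 : r ^ (2*τ) = r ^ τ * r ^ τ := by rw [two_mul, Real.rpow_add hr]
    have h2 : r ^ (-τ) = (r ^ τ)⁻¹ := Real.rpow_neg hr.le τ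
    have h3 : (r:ℝ) ^ τ ≠ 0 := (Real.rpow_pos_of_pos hr τ).ne'
    rw [hεdef, hKdef, hMdef, h1, h2]
    field_simp
  have keyA : ∀ c d : ℝ, c < d →
      Ioo c d ⊆ {lam ∈ Ioo a b | |Φ lam| < K} →
      (∀ c' d' : ℝ, Ioo c' d' ⊆ {lam ∈ Ioo a b | |Φ lam| < K} →
        Ioo c d ⊆ Ioo c' d' → c' = c ∧ d' = d) →
      d - c ≤ 2 ∧ (a < c → d < b → ε ≤ d - c) := by
    intro c d hcd hsub hmax
    have hsub' : Ioo c d ⊆ Ioo a b := fun x hx => (hsub hx).1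
    obtain ⟨hac, hdb⟩ := (Ioo_subset_Ioo_iff hcd).mp hsub'
    have hIab : Ioo c d ⊆ Icc a b := fun x hx => Ioo_subset_Icc_self (hsub' hx)
    have htr : ∀ l ∈ Ioo c d, K ≤ |Φ' l| := fun l hl => htrans l (hIab hl) (hsub hl).2.le
    -- sign constancy of Φ' on (c,d)
    have hsign : (∀ l ∈ Ioo c d, K ≤ Φ' l) ∨ (∀ l ∈ Ioo c d, Φ' l ≤ -K) := by
      by_contra h
      push_neg at h
      obtain ⟨⟨x, hx, hx'⟩, ⟨y, hy, hy'⟩⟩ := h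
      have hxneg : Φ' x ≤ -K := by
        rcases le_abs.mp (htr x hx) with h' | h'
        · linarith
        · linarith
      have hypos : K ≤ Φ' y := by
        rcases le_abs.mp (htr y hy) with h' | h'
        · exact h'
        · linarith
      have huIcc : uIcc x y ⊆ Ioo c d := fun t ht =>
        ⟨lt_of_lt_of_le (lt_min hx.1 hy.1) ht.1, lt_of_le_of_lt ht.2 (max_lt hx.2 hy.2)⟩
      have h0 : (0:ℝ) ∈ uIcc (Φ' x) (Φ' y) := by
        rw [Set.mem_uIcc]
        left; constructor <;> linarith
      obtain ⟨w, hw, hw0⟩ := intermediate_value_uIcc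
        (hcont.mono (fun t ht => hIab (huIcc ht))) h0
      have := htr w (huIcc hw)
      rw [hw0] at this
      simp at this
      linarith
    -- maximality forces |Φ| = K at interior endpoints
    have hKc : a < c → K ≤ |Φ c| := by
      intro hac'
      by_contra hcon
      push_neg at hcon
      have hcb : c < b := lt_of_lt_of_le hcd hdb
      have hcIcc : c ∈ Icc a b := ⟨hac'.le, hcb.le⟩
      have hca : ContinuousAt (fun x => |Φ x|) c := (hderiv c hcIcc).continuousAt.abs
      have hev : (fun x => |Φ x|) ⁻¹' (Iio K) ∈ 𝓝 c := hca (Iio_mem_nhds hcon)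
      obtain ⟨η, hη, hball⟩ := Metric.mem_nhds_iff.mp hev
      set η' := min η (min (c - a) (d - c)) with hη'def
      have hη'1 : η' ≤ η := min_le_left _ _
      have hη'2 : η' ≤ c - a := le_trans (min_le_right _ _) (min_le_left _ _)
      have hη'3 : η' ≤ d - c := le_trans (min_le_right _ _) (min_le_right _ _)
      have hη'pos : 0 < η' := lt_min hη (lt_min (by linarith) (by linarith))
      have hsub2 : Ioo (c - η'/2) d ⊆ {lam ∈ Ioo a b | |Φ lam| < K} := by
        intro x hx
        rcases lt_or_ge c x with h1 | h1
        · exact hsub ⟨h1, hx.2⟩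
        · refine ⟨⟨by linarith [hx.1], by linarith⟩, ?_⟩
          have : x ∈ Metric.ball c η := by
            rw [Metric.mem_ball, Real.dist_eq, abs_lt]
            constructor <;> linarith [hx.1]
          exact hball this
      have := (hmax (c - η'/2) d hsub2 (Ioo_subset_Ioo (by linarith) le_rfl)).1
      linarith
    have hKd : d < b → K ≤ |Φ d| := by
      intro hdb'
      by_contra hcon
      push_neg at hcon
      have had : a < d := lt_of_le_of_lt hac hcd
      have hdIcc : d ∈ Icc a b := ⟨had.le, hdb'.le⟩
      have hda : ContinuousAt (fun x => |Φ x|) d := (hderiv d hdIcc).continuousAt.abs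
      have hev : (fun x => |Φ x|) ⁻¹' (Iio K) ∈ 𝓝 d := hda (Iio_mem_nhds hcon)
      obtain ⟨η, hη, hball⟩ := Metric.mem_nhds_iff.mp hev
      set η' := min η (min (b - d) (d - c)) with hη'def
      have hη'1 : η' ≤ η := min_le_left _ _
      have hη'2 : η' ≤ b - d := le_trans (min_le_right _ _) (min_le_left _ _)
      have hη'3 : η' ≤ d - c := le_trans (min_le_right _ _) (min_le_right _ _)
      have hη'pos : 0 < η' := lt_min hη (lt_min (by linarith) (by linarith))
      have hsub2 : Ioo c (d + η'/2) ⊆ {lam ∈ Ioo a b | |Φ lam| < K} := by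
        intro x hx
        rcases lt_or_ge x d with h1 | h1
        · exact hsub ⟨hx.1, h1⟩
        · refine ⟨⟨by linarith [hx.1], by linarith [hx.2]⟩, ?_⟩
          have : x ∈ Metric.ball d η := by
            rw [Metric.mem_ball, Real.dist_eq, abs_lt]
            constructor <;> linarith [hx.2]
          exact hball this
      have := (hmax c (d + η'/2) hsub2 (Ioo_subset_Ioo le_rfl (by linarith))).2
      linarith
    rcases hsign with hpos | hneg
    · obtain ⟨h1, h2⟩ := aux_interval a b c d K M hK hcd hac hdb Φ Φ' hderiv hpos
        (fun l hl => (hsub hl).2) (fun l hl => hreg l (hIab hl))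
      refine ⟨h1, fun hac' hdb' => ?_⟩
      have h3 := h2 (hKc hac') (hKd hdb')
      have h4 : ε * M ≤ (d - c) * M := by rw [hεM]; linarith
      exact le_of_mul_le_mul_right h4 hMpos
    · obtain ⟨h1, h2⟩ := aux_interval a b c d K M hK hcd hac hdb
        (fun x => -Φ x) (fun x => -Φ' x)
        (fun lam hl => (hderiv lam hl).neg)
        (fun l hl => by have := hneg l hl; show K ≤ -Φ' l; linarith)
        (fun l hl => by rw [abs_neg]; exact (hsub hl).2)
        (fun l hl => by rw [abs_neg]; exact hreg l (hIab hl))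
      simp only [abs_neg] at h2
      refine ⟨h1, fun hac' hdb' => ?_⟩
      have h3 := h2 (hKc hac') (hKd hdb')
      have h4 : ε * M ≤ (d - c) * M := by rw [hεM]; linarith
      exact le_of_mul_le_mul_right h4 hMpos
  refine ⟨keyA, ?_⟩
  -- finiteness
  set S := {p : ℝ × ℝ | p.1 < p.2 ∧
      Ioo p.1 p.2 ⊆ {lam ∈ Ioo a b | |Φ lam| < K} ∧
      (∀ c' d' : ℝ, Ioo c' d' ⊆ {lam ∈ Ioo a b | |Φ lam| < K} →
        Ioo p.1 p.2 ⊆ Ioo c' d' → c' = p.1 ∧ d' = p.2)} with hSdef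
  have hmax_eq : ∀ p ∈ S, ∀ q ∈ S, (Ioo p.1 p.2 ∩ Ioo q.1 q.2).Nonempty → p = q := by
    rintro p ⟨hp1, hp2, hp3⟩ q ⟨hq1, hq2, hq3⟩ ⟨z, hzp, hzq⟩
    have hunion : Ioo (min p.1 q.1) (max p.2 q.2) ⊆ {lam ∈ Ioo a b | |Φ lam| < K} := by
      intro x hx
      rcases le_total x z with hxz | hxz
      · rcases min_lt_iff.mp hx.1 with h | h
        · exact hp2 ⟨h, lt_of_le_of_lt hxz hzp.2⟩
        · exact hq2 ⟨h, lt_of_le_of_lt hxz hzq.2⟩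
      · rcases lt_max_iff.mp hx.2 with h | h
        · exact hp2 ⟨lt_of_lt_of_le hzp.1 hxz, h⟩
        · exact hq2 ⟨lt_of_lt_of_le hzq.1 hxz, h⟩
    have hp' := hp3 _ _ hunion (Ioo_subset_Ioo (min_le_left _ _) (le_max_left _ _))
    have hq' := hq3 _ _ hunion (Ioo_subset_Ioo (min_le_right _ _) (le_max_right _ _))
    have e1 : p.1 = q.1 := hp'.1.symm.trans hq'.1
    have e2 : p.2 = q.2 := hp'.2.symm.trans hq'.2
    exact Prod.ext e1 e2
  have hends : ∀ p ∈ S, a ≤ p.1 ∧ p.2 ≤ b := by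
    rintro p ⟨hp1, hp2, _⟩
    exact (Ioo_subset_Ioo_iff hp1).mp (fun x hx => (hp2 hx).1)
  have hcover : S ⊆ {p | p ∈ S ∧ p.1 = a} ∪ {p | p ∈ S ∧ p.2 = b} ∪ {p | p ∈ S ∧ ε ≤ p.2 - p.1} := by
    intro p hp
    obtain ⟨ha1, hb1⟩ := hends p hp
    rcases eq_or_lt_of_le ha1 with h | h
    · exact Or.inl (Or.inl ⟨hp, h.symm⟩)
    rcases eq_or_lt_of_le hb1 with h' | h'
    · exact Or.inl (Or.inr ⟨hp, h'⟩)
    · exact Or.inr ⟨hp, (keyA p.1 p.2 hp.1 hp.2.1 hp.2.2).2 h h'⟩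
  refine Set.Finite.subset (Set.Finite.union (Set.Finite.union ?_ ?_) ?_) hcover
  · apply Set.Subsingleton.finite
    rintro p ⟨hp, hpa⟩ q ⟨hq, hqa⟩
    apply hmax_eq p hp q hq
    have h1 : a < p.2 := hpa ▸ hp.1
    have h2 : a < q.2 := hqa ▸ hq.1
    refine ⟨(a + min p.2 q.2)/2, ⟨?_, ?_⟩, ⟨?_, ?_⟩⟩
    · rw [hpa]; have := lt_min h1 h2; linarith
    · have := min_le_left p.2 q.2; have := lt_min h1 h2; linarith
    · rw [hqa]; have := lt_min h1 h2; linarith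
    · have := min_le_right p.2 q.2; have := lt_min h1 h2; linarith
  · apply Set.Subsingleton.finite
    rintro p ⟨hp, hpb⟩ q ⟨hq, hqb⟩
    apply hmax_eq p hp q hq
    have h1 : p.1 < b := hpb ▸ hp.1
    have h2 : q.1 < b := hqb ▸ hq.1
    refine ⟨(max p.1 q.1 + b)/2, ⟨?_, ?_⟩, ⟨?_, ?_⟩⟩
    · have := le_max_left p.1 q.1; have := max_lt h1 h2; linarith
    · rw [hpb]; have := max_lt h1 h2; linarith
    · have := le_max_right p.1 q.1; have := max_lt h1 h2; linarith
    · rw [hqb]; have := max_lt h1 h2; linarith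
  · have hinj : Set.InjOn (fun p : ℝ × ℝ => ⌊(p.1 - a)/ε⌋) {p | p ∈ S ∧ ε ≤ p.2 - p.1} := by
      rintro p ⟨hp, hpl⟩ q ⟨hq, hql⟩ hfeq
      by_contra hpq
      simp only at hfeq
      have hdisj : ¬ (Ioo p.1 p.2 ∩ Ioo q.1 q.2).Nonempty := fun h =>
        hpq (hmax_eq p hp q hq h)
      have hsep : p.2 ≤ q.1 ∨ q.2 ≤ p.1 := by
        by_contra h
        push_neg at h
        exact hdisj ⟨(max p.1 q.1 + min p.2 q.2)/2,
          ⟨by have := le_max_left p.1 q.1; have := lt_min hp.1 h.2; have := lt_min h.1 hq.1;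
              have := max_lt (lt_min hp.1 h.2) (lt_min h.1 hq.1); have := min_le_left p.2 q.2; linarith,
           by have := max_lt (lt_min hp.1 h.2) (lt_min h.1 hq.1); have := min_le_left p.2 q.2; linarith⟩,
          ⟨by have := le_max_right p.1 q.1;
              have := max_lt (lt_min hp.1 h.2) (lt_min h.1 hq.1); linarith,
           by have := max_lt (lt_min hp.1 h.2) (lt_min h.1 hq.1); have := min_le_right p.2 q.2; linarith⟩⟩
      have hfl : ∀ u v : ℝ, ε ≤ v - u → ⌊(u - a)/ε⌋ + 1 ≤ ⌊(v - a)/ε⌋ := by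
        intro u v huv
        apply Int.le_floor.mpr
        push_cast
        have hfloor := Int.floor_le ((u - a)/ε)
        have hdiv : (v - a)/ε = (u - a)/ε + (v - u)/ε := by rw [← add_div]; congr 1; ring
        have hone : (1:ℝ) ≤ (v - u)/ε := (one_le_div hε).mpr huv
        rw [hdiv]
        linarith
      rcases hsep with h | h
      · have := hfl p.1 q.1 (by linarith)
        omega
      · have := hfl q.1 p.1 (by linarith)
        omega
    apply Set.Finite.of_finite_image ?_ hinj
    apply Set.Finite.subset (Set.finite_Icc (0:ℤ) ⌊(b - a)/ε⌋)
    rintro n ⟨p, ⟨hp, hpl⟩, rfl⟩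
    obtain ⟨ha1, hb1⟩ := hends p hp
    have hp1b : p.1 ≤ b := le_trans hp.1.le hb1
    constructor
    · exact Int.floor_nonneg.mpr (div_nonneg (by linarith) hε.le)
    · apply Int.floor_le_floor
      gcongr
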